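/- If Γ₁ and Γ₂ are (2,2)-tight subgraphs of a (2,2)-sparse multigraph Γ and Γ₁ ∩ Γ₂ is nonempty, then both Γ₁ ∪ Γ₂ and Γ₁ ∩ Γ₂ are (2,2)-tight. -/
import Mathlib


/-- A finite multigraph: each edge is incident to an unordered pair of vertices
(loops and parallel edges allowed). -/
structure MGraph (V E : Type) where
  inc : E → Sym2 V

namespace MGraph

variable {V E : Type} [DecidableEq V] [DecidableEq E]

/-- A subgraph of a multigraph: a set of vertices and a set of edges whose
endpoints all lie in the vertex set. -/
structure Sub (G : MGraph V E) where
  verts : Finset V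
  edges : Finset E
  compat : ∀ e ∈ edges, ∀ v ∈ G.inc e, v ∈ verts

variable {G : MGraph V E}

/-- γ(H) = 2|V(H)| - |E(H)|. -/
def Sub.gamma (H : G.Sub) : ℤ := 2 * H.verts.card - H.edges.card

def Sub.union (H K : G.Sub) : G.Sub where
  verts := H.verts ∪ K.verts
  edges := H.edges ∪ K.edges
  compat := by
    intro e he v hv
    rcases Finset.mem_union.1 he with h | h
    · exact Finset.mem_union.2 (Or.inl (H.compat e h v hv))
    · exact Finset.mem_union.2 (Or.inr (K.compat e h v hv))

def Sub.inter (H K : G.Sub) : G.Sub where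
  verts := H.verts ∩ K.verts
  edges := H.edges ∩ K.edges
  compat := by
    intro e he v hv
    rcases Finset.mem_inter.1 he with ⟨h1, h2⟩
    exact Finset.mem_inter.2 ⟨H.compat e h1 v hv, K.compat e h2 v hv⟩

/-- Subgraph containment. -/
def Sub.le (H K : G.Sub) : Prop := H.verts ⊆ K.verts ∧ H.edges ⊆ K.edges

/-- H is (2,l)-sparse: every nonempty subgraph K of H has γ(K) ≥ l. -/
def Sparse (l : ℤ) (H : G.Sub) : Prop :=
  ∀ K : G.Sub, K.le H → K.verts.Nonempty → l ≤ K.gamma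

/-- H is (2,l)-tight: (2,l)-sparse and γ(H) = l. -/
def Tight (l : ℤ) (H : G.Sub) : Prop := Sparse l H ∧ H.gamma = l

/-- The whole graph, as a subgraph of itself. -/
def top (G : MGraph V E) [Fintype V] [Fintype E] : G.Sub where
  verts := Finset.univ
  edges := Finset.univ
  compat := fun _ _ v _ => Finset.mem_univ v

/-- Adjacency within a subgraph. -/
def Sub.Adj (H : G.Sub) (u w : V) : Prop := ∃ e ∈ H.edges, G.inc e = s(u, w)

/-- A subgraph is connected if any two of its vertices are joined by a walk in it. -/
def Sub.Connected (H : G.Sub) : Prop :=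
  ∀ u ∈ H.verts, ∀ w ∈ H.verts, Relation.ReflTransGen H.Adj u w

/-- The graph obtained from `G` by identifying the vertex `b` with the vertex `a`
and deleting the two edges `f` and `g`. -/
def contractDel (G : MGraph V E) (a b : V) (hab : a ≠ b) (f g : E) :
    MGraph {v : V // v ≠ b} {e : E // e ≠ f ∧ e ≠ g} where
  inc e := (G.inc e.1).map fun v => if hv : v = b then ⟨a, hab⟩ else ⟨v, hv⟩

/-- Add a single new edge joining `u` and `v`. -/
def addEdge (G : MGraph V E) (u v : V) : MGraph V (Option E) where
  inc := fun e? => e?.elim s(u, v) G.inc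

end MGraph

/-- if Γ₁, Γ₂ are (2,2)-tight subgraphs of a (2,2)-sparse multigraph Γ
and Γ₁ ∩ Γ₂ is nonempty, then Γ₁ ∪ Γ₂ and Γ₁ ∩ Γ₂ are (2,2)-tight. -/
theorem tight_union_and_tight_inter {V E : Type} [DecidableEq V] [DecidableEq E]
    [Fintype V] [Fintype E] (G : MGraph V E)
    (hsp : MGraph.Sparse 2 (MGraph.top G))
    (Γ₁ Γ₂ : G.Sub)
    (h1 : MGraph.Tight 2 Γ₁) (h2 : MGraph.Tight 2 Γ₂)
    (hne : (Γ₁.inter Γ₂).verts.Nonempty) :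
    MGraph.Tight 2 (Γ₁.union Γ₂) ∧ MGraph.Tight 2 (Γ₁.inter Γ₂) := by
  have letop : ∀ K : G.Sub, K.le (MGraph.top G) :=
    fun K => ⟨fun v _ => Finset.mem_univ v, fun e _ => Finset.mem_univ e⟩
  have hune : (Γ₁.union Γ₂).verts.Nonempty := by
    obtain ⟨v, hv⟩ := hne
    exact ⟨v, Finset.mem_union.2 (Or.inl (Finset.mem_inter.1 hv).1)⟩
  have hgu : 2 ≤ (Γ₁.union Γ₂).gamma := hsp _ (letop _) hune
  have hgi : 2 ≤ (Γ₁.inter Γ₂).gamma := hsp _ (letop _) hne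
  have hsum : (Γ₁.union Γ₂).gamma + (Γ₁.inter Γ₂).gamma = 4 := by
    have hv : (Γ₁.verts ∪ Γ₂.verts).card + (Γ₁.verts ∩ Γ₂.verts).card
        = Γ₁.verts.card + Γ₂.verts.card := Finset.card_union_add_card_inter _ _
    have he : (Γ₁.edges ∪ Γ₂.edges).card + (Γ₁.edges ∩ Γ₂.edges).card
        = Γ₁.edges.card + Γ₂.edges.card := Finset.card_union_add_card_inter _ _
    have h1' := h1.2
    have h2' := h2.2
    have hv' : ((Γ₁.verts ∪ Γ₂.verts).card : ℤ) + (Γ₁.verts ∩ Γ₂.verts).card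
        = Γ₁.verts.card + Γ₂.verts.card := by exact_mod_cast congrArg Nat.cast hv
    have he' : ((Γ₁.edges ∪ Γ₂.edges).card : ℤ) + (Γ₁.edges ∩ Γ₂.edges).card
        = Γ₁.edges.card + Γ₂.edges.card := by exact_mod_cast congrArg Nat.cast he
    simp only [MGraph.Sub.gamma, MGraph.Sub.union, MGraph.Sub.inter] at *
    linarith
  have hgu2 : (Γ₁.union Γ₂).gamma = 2 := by linarith
  have hgi2 : (Γ₁.inter Γ₂).gamma = 2 := by linarith
  exact ⟨⟨fun K _ hK => hsp K (letop K) hK, hgu2⟩,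
         ⟨fun K _ hK => hsp K (letop K) hK, hgi2⟩⟩
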